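/- Orthogonality relations for the discrete short-time Fourier transform: for g, h, x, y ∈ ℂ^N, ⟨V_g x, V_h y⟩ = N ⟨x, y⟩ ⟨h, g⟩, where the left inner product is over (ℤ_N)². -/

import Mathlib

open scoped Real ComplexConjugate BigOperators

/-- The character `m ↦ e^{2πi m/N}` on `ℤ_N`. -/
noncomputable def zchar (N : ℕ) [NeZero N] (m : ZMod N) : ℂ :=
  Complex.exp (2 * π * Complex.I * (m.val : ℝ) / N)

/-- Circular translation `(T_k x)_j = x_{j-k}` on `ℂ^N`. -/
def tshift {N : ℕ} [NeZero N] (k : ZMod N) (x : ZMod N → ℂ) : ZMod N → ℂ :=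
  fun j => x (j - k)

/-- Modulation `(M_l x)_j = e^{2πi jl/N} x_j` on `ℂ^N`. -/
noncomputable def mshift {N : ℕ} [NeZero N] (l : ZMod N) (x : ZMod N → ℂ) : ZMod N → ℂ :=
  fun j => zchar N (j * l) * x j

/-- Time-frequency shift `π(k,l) = M_l T_k`. -/
noncomputable def tfshift {N : ℕ} [NeZero N] (p : ZMod N × ZMod N)
    (x : ZMod N → ℂ) : ZMod N → ℂ :=
  mshift p.2 (tshift p.1 x)

/-- The discrete short-time Fourier transform `V_g x(λ) = ⟨x, π(λ)g⟩`. -/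
noncomputable def dstft {N : ℕ} [NeZero N] (g x : ZMod N → ℂ)
    (p : ZMod N × ZMod N) : ℂ :=
  ∑ n : ZMod N, x n * conj (tfshift p g n)

noncomputable def eroot (N : ℕ) : ℂ := Complex.exp (2 * π * Complex.I / N)

variable {N : ℕ} [NeZero N]

lemma eroot_pow_N : eroot N ^ N = 1 := by
  have := Complex.isPrimitiveRoot_exp N (NeZero.ne N)
  simpa [eroot] using this.pow_eq_one

lemma zchar_eq (m : ZMod N) : zchar N m = eroot N ^ m.val := by
  rw [zchar, eroot, ← Complex.exp_nat_mul]
  congr 1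
  push_cast
  ring

lemma zchar_natCast (j : ℕ) : zchar N (j : ZMod N) = eroot N ^ j := by
  rw [zchar_eq, ZMod.val_natCast]
  conv_rhs => rw [← Nat.div_add_mod j N]
  rw [pow_add, pow_mul, eroot_pow_N, one_pow, one_mul]

lemma zchar_add (a b : ZMod N) : zchar N (a + b) = zchar N a * zchar N b := by
  have : a + b = ((a.val + b.val : ℕ) : ZMod N) := by simp
  rw [this, zchar_natCast, pow_add, zchar_eq, zchar_eq]

lemma zchar_zero : zchar N 0 = 1 := by simp [zchar]

lemma zchar_conj (m : ZMod N) : conj (zchar N m) = zchar N (-m) := by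
  have h1 : zchar N m * zchar N (-m) = 1 := by rw [← zchar_add]; simp [zchar_zero]
  have h2 : conj (zchar N m) = (zchar N m)⁻¹ := by
    rw [zchar, ← Complex.exp_conj, ← Complex.exp_neg]
    congr 1
    simp [map_div₀, Complex.conj_I, map_ofNat]
    ring
  rw [h2]
  exact (inv_eq_of_mul_eq_one_right h1).symm ▸ rfl

lemma zchar_sum (a : ZMod N) : ∑ l : ZMod N, zchar N (a * l) = if a = 0 then (N : ℂ) else 0 := by
  have hsum : ∑ l : ZMod N, zchar N (a * l) = ∑ j ∈ Finset.range N, (eroot N ^ a.val) ^ j := by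
    refine Finset.sum_nbij' (fun l : ZMod N => l.val) (fun j => (j : ZMod N)) ?_ ?_ ?_ ?_ ?_
    · intro l _; exact Finset.mem_range.2 (ZMod.val_lt l)
    · intro j _; exact Finset.mem_univ _
    · intro l _; simp [ZMod.natCast_val, ZMod.cast_id]
    · intro j hj; simp [ZMod.val_natCast, Nat.mod_eq_of_lt (Finset.mem_range.1 hj)]
    · intro l _
      have : a * l = ((a.val * l.val : ℕ) : ZMod N) := by simp
      rw [this, zchar_natCast, pow_mul]
  rw [hsum]
  split_ifs with h
  · subst h; simp
  · have hprim := Complex.isPrimitiveRoot_exp N (NeZero.ne N)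
    have hne : eroot N ^ a.val ≠ 1 := by
      apply hprim.pow_ne_one_of_pos_of_lt
      · exact (fun hv => h (by rwa [← ZMod.val_eq_zero]))
      · exact ZMod.val_lt a
    rw [geom_sum_eq hne, ← pow_mul, mul_comm a.val N, pow_mul, eroot_pow_N, one_pow]
    simp


/-- Orthogonality relations for the discrete STFT:
`⟨V_g x, V_h y⟩ = N ⟨x, y⟩ ⟨h, g⟩`. -/
theorem dstft_orthogonality {N : ℕ} [NeZero N] (g h x y : ZMod N → ℂ) :
    ∑ p : ZMod N × ZMod N, dstft g x p * conj (dstft h y p) =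
      (N : ℂ) * (∑ n : ZMod N, x n * conj (y n)) *
        (∑ n : ZMod N, h n * conj (g n)) := by
  classical
  have key : ∀ k l : ZMod N,
      dstft g x (k, l) * conj (dstft h y (k, l)) =
      ∑ n : ZMod N, ∑ m : ZMod N,
        (x n * conj (g (n - k)) * conj (y m) * h (m - k)) * zchar N ((m - n) * l) := by
    intro k l
    rw [dstft, dstft, map_sum, Finset.sum_mul_sum]
    refine Finset.sum_congr rfl fun n _ => Finset.sum_congr rfl fun m _ => ?_
    simp only [tfshift, mshift, tshift, map_mul, Complex.conj_conj]
    rw [zchar_conj]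
    have e : zchar N ((m - n) * l) = zchar N (-(n * l)) * zchar N (m * l) := by
      rw [← zchar_add]; congr 1; ring
    rw [e]; ring
  calc ∑ p : ZMod N × ZMod N, dstft g x p * conj (dstft h y p)
      = ∑ k : ZMod N, ∑ l : ZMod N, ∑ n : ZMod N, ∑ m : ZMod N,
          (x n * conj (g (n - k)) * conj (y m) * h (m - k)) * zchar N ((m - n) * l) := by
        rw [Fintype.sum_prod_type]
        exact Finset.sum_congr rfl fun k _ => Finset.sum_congr rfl fun l _ => key k l
    _ = ∑ k : ZMod N, ∑ n : ZMod N, ∑ m : ZMod N,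
          (x n * conj (g (n - k)) * conj (y m) * h (m - k)) * ∑ l : ZMod N, zchar N ((m - n) * l) := by
        refine Finset.sum_congr rfl fun k _ => ?_
        rw [Finset.sum_comm]
        refine Finset.sum_congr rfl fun n _ => ?_
        rw [Finset.sum_comm]
        refine Finset.sum_congr rfl fun m _ => ?_
        rw [Finset.mul_sum]
    _ = ∑ k : ZMod N, ∑ n : ZMod N,
          (x n * conj (y n) * (h (n - k) * conj (g (n - k)))) * N := by
        refine Finset.sum_congr rfl fun k _ => Finset.sum_congr rfl fun n _ => ?_
        simp only [zchar_sum, sub_eq_zero, mul_ite, mul_zero]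
        rw [Finset.sum_ite_eq' Finset.univ n]
        simp only [Finset.mem_univ, if_true]
        ring
    _ = (N : ℂ) * (∑ n : ZMod N, x n * conj (y n)) * (∑ n : ZMod N, h n * conj (g n)) := by
        rw [Finset.sum_comm]
        have step : ∀ n : ZMod N,
            (∑ k : ZMod N, (x n * conj (y n) * (h (n - k) * conj (g (n - k)))) * N)
            = (x n * conj (y n)) * N * ∑ j : ZMod N, h j * conj (g j) := by
          intro n
          have hre : ∑ k : ZMod N, h (n - k) * conj (g (n - k))
              = ∑ j : ZMod N, h j * conj (g j) :=
            Fintype.sum_equiv (Equiv.subLeft n) _ _ (fun k => rfl)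
          rw [← hre, Finset.mul_sum]
          exact Finset.sum_congr rfl fun k _ => by ring
        rw [Finset.sum_congr rfl fun n _ => step n, ← Finset.sum_mul, ← Finset.sum_mul]
        ring
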